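/- Let X be a compact subset of ℝ^N, let S¹ ⊂ ℝ² be the unit circle, and equip the compact space X × S¹ ⊂ ℝ^{N+2} with a finite positive Borel measure μ. Consider the test functions on X × S¹ of the form (x, s) ↦ u(x)·v(s) with u ∈ {1, pr_1, …, pr_N, −pr_1, …, −pr_N, Σ_{k=1}^N pr_k²} (restricted to X) and v ∈ {1, cos, −cos, sin, −sin} (the restrictions of 1, ±pr_1, ±pr_2 on ℝ² to S¹). Let (T_n) be a sequence of weakly nonlinear (sublinear and translatable) and monotone operators from C(X × S¹) into itself such that for each such test function h and every ε > 0 one has μ({z ∈ X × S¹ : |T_n(h)(z) − h(z)| ≥ ε}) → 0 as n → ∞. Then for every f ∈ C(X × S¹) and every ε > 0, μ({z ∈ X × S¹ : |T_n(f)(z) − f(z)| ≥ ε}) → 0 as n → ∞. -/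

import Mathlib

open MeasureTheory Filter Topology Set

section Aux
variable {Z : Type*} [TopologicalSpace Z] (T : C(Z,ℝ) → C(Z,ℝ))
  (hsub : ∀ f g : C(Z,ℝ), T (f+g) ≤ T f + T g)
  (hhom : ∀ (α:ℝ), 0 ≤ α → ∀ f : C(Z,ℝ), T (α•f) = α•T f)
  (hmono : ∀ f g : C(Z,ℝ), f ≤ g → T f ≤ T g)
  (htrans : ∀ f : C(Z,ℝ), ∀ (α:ℝ), 0 ≤ α → T (f + α•1) = T f + α • T 1)

include hhom in
lemma aux_zero : T 0 = 0 := by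
  have := hhom 0 le_rfl 0
  simpa using this

include hsub hhom in
lemma aux_finsub {ι : Type*} (s : Finset ι) (g : ι → C(Z,ℝ)) :
    T (∑ i ∈ s, g i) ≤ ∑ i ∈ s, T (g i) := by
  classical
  induction s using Finset.cons_induction with
  | empty => simp [aux_zero T hhom]
  | cons a s ha ih =>
      rw [Finset.sum_cons, Finset.sum_cons]
      exact le_trans (hsub _ _) (add_le_add le_rfl ih)

include hhom in
lemma aux_cbound (c : ℝ) (g : C(Z,ℝ)) (w : Z) :
    T (c • g) w ≤ c * g w + |c| * (|T g w - g w| + |T (-g) w - (-g) w|) := by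
  rcases le_or_gt 0 c with hc | hc
  · rw [hhom c hc g]
    have : (c • T g) w = c * T g w := rfl
    rw [this, abs_of_nonneg hc]
    nlinarith [abs_nonneg (T (-g) w - (-g) w), le_abs_self (T g w - g w),
      abs_nonneg (T g w - g w)]
  · have h1 : c • g = (-c) • (-g) := by rw [smul_neg, neg_smul, neg_neg]
    rw [h1, hhom (-c) (by linarith) (-g)]
    have : ((-c) • T (-g)) w = (-c) * T (-g) w := rfl
    rw [this, abs_of_neg hc]
    have h2 : (-g : C(Z,ℝ)) w = -(g w) := rfl
    nlinarith [abs_nonneg (T g w - g w), le_abs_self (T (-g) w - (-g) w),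
      abs_nonneg (T (-g) w - (-g) w)]

include hsub hhom hmono htrans in
lemma aux_key (f h : C(Z,ℝ)) (M : ℝ) (hM : ∀ z, |f z| ≤ M) (w : Z)
    (hup : ∀ z, f z ≤ f w + h z) (hlow : ∀ z, f w ≤ f z + h z) :
    |T f w - f w * T 1 w| ≤ T h w := by
  have hM0 : 0 ≤ M := le_trans (abs_nonneg _) (hM w)
  have hβ : 0 ≤ f w + M := by have := hM w; rw [abs_le] at this; linarith
  have e1 : T (f + M • 1) = T f + M • T 1 := htrans f M hM0
  have e2 : T (h + (f w + M) • 1) = T h + (f w + M) • T 1 := htrans h _ hβ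
  have le1 : f + M • 1 ≤ h + (f w + M) • 1 := by
    rw [ContinuousMap.le_def]
    intro z
    have := hup z
    simp only [ContinuousMap.add_apply, ContinuousMap.smul_apply, ContinuousMap.one_apply,
      smul_eq_mul, mul_one]
    linarith
  have up := hmono _ _ le1
  rw [e1, e2] at up
  have up' := ContinuousMap.le_def.mp up w
  simp only [ContinuousMap.add_apply, ContinuousMap.smul_apply, smul_eq_mul] at up'
  have e3 : T ((f w + M) • 1) = (f w + M) • T 1 := hhom _ hβ 1
  have le2 : ((f w + M) • 1 : C(Z,ℝ)) ≤ (f + M • 1) + h := by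
    rw [ContinuousMap.le_def]
    intro z
    have := hlow z
    simp only [ContinuousMap.add_apply, ContinuousMap.smul_apply, ContinuousMap.one_apply,
      smul_eq_mul, mul_one]
    linarith
  have lo := le_trans (hmono _ _ le2) (hsub (f + M • 1) h)
  rw [e3, e1] at lo
  have lo' := ContinuousMap.le_def.mp lo w
  simp only [ContinuousMap.add_apply, ContinuousMap.smul_apply, smul_eq_mul] at lo'
  rw [abs_le]
  constructor <;> nlinarith

end Aux

/-- The unit circle `S¹ = {(cos θ, sin θ) : θ ∈ [0, 2π)} ⊆ ℝ²`. -/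
def unitCircle : Set (ℝ × ℝ) := {p | p.1 ^ 2 + p.2 ^ 2 = 1}

lemma unitCircle_isCompact : IsCompact unitCircle := by
  rw [Metric.isCompact_iff_isClosed_bounded]
  constructor
  · have : unitCircle = (fun p : ℝ × ℝ => p.1^2 + p.2^2) ⁻¹' {1} := rfl
    rw [this]
    exact IsClosed.preimage (by fun_prop) isClosed_singleton
  · apply (Metric.isBounded_closedBall (x := (0:ℝ×ℝ)) (r := 2)).subset
    intro p hp
    have hp' : p.1^2 + p.2^2 = 1 := hp
    simp only [Metric.mem_closedBall, dist_zero_right, Prod.norm_def, Real.norm_eq_abs,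
      max_le_iff]
    constructor <;> nlinarith [sq_abs p.1, abs_nonneg p.1, sq_abs p.2, abs_nonneg p.2]

set_option maxHeartbeats 2000000 in
/-- **Remark `exPopa`, convergence in measure.** Korovkin-type theorem
on `X × S¹` (`X` a compact subset of `ℝ^N`), with a finite Borel measure `μ`, for
weakly nonlinear and monotone operators on `C(X × S¹)` and the test functions
`(x, s) ↦ u(x) v(s)` with `u ∈ {1, ±pr_1, …, ±pr_N, Σ pr_k²}` and
`v ∈ {1, ±cos, ±sin}`: convergence in `μ`-measure on the test functions implies
convergence in `μ`-measure for every `f ∈ C(X × S¹)`. -/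
theorem korovkin_product_circle_inMeasure {N : ℕ} (X : Set (Fin N → ℝ))
    (hX : IsCompact X)
    (μ : Measure (X × unitCircle)) [IsFiniteMeasure μ]
    (T : ℕ → C(X × unitCircle, ℝ) → C(X × unitCircle, ℝ))
    (hsubadd : ∀ n, ∀ f g : C(X × unitCircle, ℝ), T n (f + g) ≤ T n f + T n g)
    (hhom : ∀ n, ∀ (α : ℝ), 0 ≤ α → ∀ f : C(X × unitCircle, ℝ),
      T n (α • f) = α • T n f)
    (hmono : ∀ n, ∀ f g : C(X × unitCircle, ℝ), f ≤ g → T n f ≤ T n g)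
    (htrans : ∀ n, ∀ f : C(X × unitCircle, ℝ), ∀ (α : ℝ), 0 ≤ α →
      T n (f + α • (1 : C(X × unitCircle, ℝ)))
        = T n f + α • T n (1 : C(X × unitCircle, ℝ)))
    -- convergence in measure on the test functions `(x, s) ↦ u x * v s`
    (htest : ∀ h : C(X × unitCircle, ℝ),
      (∃ u : X → ℝ,
        ((u = fun _ => (1 : ℝ)) ∨ (∃ k : Fin N, u = fun x : X => (x : Fin N → ℝ) k) ∨
          (∃ k : Fin N, u = fun x : X => -((x : Fin N → ℝ) k)) ∨
          (u = fun x : X => ∑ k, ((x : Fin N → ℝ) k) ^ 2)) ∧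
        ∃ v : unitCircle → ℝ,
          ((v = fun _ => (1 : ℝ)) ∨ (v = fun s : unitCircle => (s : ℝ × ℝ).1) ∨
            (v = fun s : unitCircle => -(s : ℝ × ℝ).1) ∨ (v = fun s : unitCircle => (s : ℝ × ℝ).2) ∨
            (v = fun s : unitCircle => -(s : ℝ × ℝ).2)) ∧
          ∀ z : X × unitCircle, h z = u z.1 * v z.2) →
      ∀ ε : ℝ, 0 < ε →
        Tendsto (fun n => μ {z | ε ≤ |T n h z - h z|}) atTop (𝓝 0))
    (f : C(X × unitCircle, ℝ)) :
    ∀ ε : ℝ, 0 < ε →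
      Tendsto (fun n => μ {z | ε ≤ |T n f z - f z|}) atTop (𝓝 0) := by
  classical
  intro ε₀ hε₀
  haveI : CompactSpace X := isCompact_iff_compactSpace.mp hX
  haveI : CompactSpace unitCircle := isCompact_iff_compactSpace.mp unitCircle_isCompact
  -- bound on f
  set M := ‖f‖ with hMdef
  have hM : ∀ z, |f z| ≤ M := by
    intro z
    have := f.norm_coe_le_norm z
    rwa [Real.norm_eq_abs] at this
  have hM0 : 0 ≤ M := norm_nonneg f
  -- bound on X
  obtain ⟨R, hR0, hR⟩ : ∃ R : ℝ, 0 ≤ R ∧ ∀ x ∈ X, ∀ k, |x k| ≤ R := by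
    obtain ⟨R0, hR0⟩ := hX.isBounded.exists_norm_le
    refine ⟨max R0 0, le_max_right _ _, fun x hx k => ?_⟩
    have h1 : ‖x k‖ ≤ ‖x‖ := norm_le_pi_norm x k
    have h2 := hR0 x hx
    rw [Real.norm_eq_abs] at h1
    exact h1.trans (h2.trans (le_max_left _ _))
  -- test functions
  set U : Fin N → C(X × unitCircle, ℝ) := fun k =>
    ⟨fun z => (z.1 : Fin N → ℝ) k,
      (continuous_apply k).comp (continuous_subtype_val.comp continuous_fst)⟩ with hU
  set Q : C(X × unitCircle, ℝ) :=
    ⟨fun z => ∑ k, ((z.1 : Fin N → ℝ) k)^2,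
      continuous_finset_sum _ fun k _ =>
        ((continuous_apply k).comp (continuous_subtype_val.comp continuous_fst)).pow 2⟩ with hQ
  set Cc : C(X × unitCircle, ℝ) := ⟨fun z => (z.2 : ℝ × ℝ).1, by fun_prop⟩ with hCc
  set Ss : C(X × unitCircle, ℝ) := ⟨fun z => (z.2 : ℝ × ℝ).2, by fun_prop⟩ with hSs
  clear_value M U Q Cc Ss
  -- uniform continuity
  obtain ⟨δ, hδ, hδf⟩ := Metric.uniformContinuous_iff.mp
    (CompactSpace.uniformContinuous_of_continuous f.continuous) (ε₀/4) (by positivity)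
  set K := 2*M/δ^2 with hKdef
  have hK0 : 0 ≤ K := by rw [hKdef]; positivity
  -- the quadratic gauge
  set Φ : (X × unitCircle) → (X × unitCircle) → ℝ := fun w z =>
    (∑ k, ((z.1 : Fin N → ℝ) k - (w.1 : Fin N → ℝ) k)^2)
      + ((z.2 : ℝ × ℝ).1 - (w.2 : ℝ × ℝ).1)^2 + ((z.2 : ℝ × ℝ).2 - (w.2 : ℝ × ℝ).2)^2
    with hΦdef
  clear_value K Φ
  have hΦ0 : ∀ w z, 0 ≤ Φ w z := by
    intro w z
    rw [hΦdef]
    have : 0 ≤ ∑ k, ((z.1 : Fin N → ℝ) k - (w.1 : Fin N → ℝ) k)^2 :=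
      Finset.sum_nonneg fun k _ => sq_nonneg _
    positivity
  have hΦself : ∀ w, Φ w w = 0 := by intro w; rw [hΦdef]; simp
  -- pointwise estimate
  have hfest : ∀ w z, |f z - f w| ≤ ε₀/4 + K * Φ w z := by
    intro w z
    rcases lt_or_ge (dist z w) δ with hd | hd
    · have := hδf hd
      rw [Real.dist_eq] at this
      have h2 : 0 ≤ K * Φ w z := mul_nonneg hK0 (hΦ0 w z)
      exact le_trans this.le (le_add_of_nonneg_right h2)
    · -- Φ w z ≥ δ^2
      have hΦδ : δ^2 ≤ Φ w z := by
        rw [Prod.dist_eq] at hd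
        rcases le_max_iff.mp hd with h1 | h1
        · rw [Subtype.dist_eq] at h1
          have : ¬ dist (z.1 : Fin N → ℝ) (w.1 : Fin N → ℝ) < δ := not_lt.mpr h1
          rw [dist_pi_lt_iff hδ] at this
          push_neg at this
          obtain ⟨k, hk⟩ := this
          rw [Real.dist_eq] at hk
          have h3 : δ^2 ≤ ((z.1 : Fin N → ℝ) k - (w.1 : Fin N → ℝ) k)^2 := by
            nlinarith [abs_nonneg ((z.1 : Fin N → ℝ) k - (w.1 : Fin N → ℝ) k),
              sq_abs ((z.1 : Fin N → ℝ) k - (w.1 : Fin N → ℝ) k)]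
          have h4 : ((z.1 : Fin N → ℝ) k - (w.1 : Fin N → ℝ) k)^2
              ≤ ∑ j, ((z.1 : Fin N → ℝ) j - (w.1 : Fin N → ℝ) j)^2 :=
            Finset.single_le_sum (f := fun j => ((z.1 : Fin N → ℝ) j - (w.1 : Fin N → ℝ) j)^2)
              (fun j _ => sq_nonneg _) (Finset.mem_univ k)
          have h5 : 0 ≤ ((z.2 : ℝ × ℝ).1 - (w.2 : ℝ × ℝ).1)^2 := sq_nonneg _
          have h6 : 0 ≤ ((z.2 : ℝ × ℝ).2 - (w.2 : ℝ × ℝ).2)^2 := sq_nonneg _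
          simp only [hΦdef]
          linarith
        · rw [Subtype.dist_eq, Prod.dist_eq] at h1
          have hsum : 0 ≤ ∑ j, ((z.1 : Fin N → ℝ) j - (w.1 : Fin N → ℝ) j)^2 :=
            Finset.sum_nonneg fun j _ => sq_nonneg _
          rcases le_max_iff.mp h1 with h2 | h2 <;> rw [Real.dist_eq] at h2
          · have h3 : δ^2 ≤ ((z.2 : ℝ × ℝ).1 - (w.2 : ℝ × ℝ).1)^2 := by
              nlinarith [abs_nonneg ((z.2 : ℝ × ℝ).1 - (w.2 : ℝ × ℝ).1),
                sq_abs ((z.2 : ℝ × ℝ).1 - (w.2 : ℝ × ℝ).1)]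
            have h6 : 0 ≤ ((z.2 : ℝ × ℝ).2 - (w.2 : ℝ × ℝ).2)^2 := sq_nonneg _
            simp only [hΦdef]
            linarith
          · have h3 : δ^2 ≤ ((z.2 : ℝ × ℝ).2 - (w.2 : ℝ × ℝ).2)^2 := by
              nlinarith [abs_nonneg ((z.2 : ℝ × ℝ).2 - (w.2 : ℝ × ℝ).2),
                sq_abs ((z.2 : ℝ × ℝ).2 - (w.2 : ℝ × ℝ).2)]
            have h5 : 0 ≤ ((z.2 : ℝ × ℝ).1 - (w.2 : ℝ × ℝ).1)^2 := sq_nonneg _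
            simp only [hΦdef]
            linarith
      have h2M : |f z - f w| ≤ 2*M := by
        have n1 := hM z; have n2 := hM w
        rw [abs_le] at n1 n2 ⊢
        constructor <;> [linarith only [n1.1, n2.2]; linarith only [n1.2, n2.1]]
      have : 2*M ≤ K * Φ w z := by
        have hδ2 : (0:ℝ) < δ^2 := by positivity
        have h1 : K * δ^2 ≤ K * Φ w z := mul_le_mul_of_nonneg_left hΦδ hK0
        have h2 : K * δ^2 = 2*M := by
          rw [hKdef]; field_simp
        linarith only [h1, h2]
      linarith only [h2M, this, hε₀]
  -- coefficient bounds
  have hNR : (0:ℝ) ≤ (N:ℝ)*R^2 := by positivity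
  set A := (N:ℝ)*R^2 + 2*R + 4 with hAdef
  have hA1 : 1 ≤ A := by rw [hAdef]; linarith only [hNR, hR0]
  have hA2 : 2 ≤ A := by rw [hAdef]; linarith only [hNR, hR0]
  have hA2R : 2*R ≤ A := by rw [hAdef]; linarith only [hNR]
  have hANR : (N:ℝ)*R^2 + 2 ≤ A := by rw [hAdef]; linarith only [hR0]
  have hA0 : 0 ≤ A := by linarith only [hA1]
  clear_value A
  set C := K*A + M + ε₀ + 1 with hCdef
  have hCKA : K*A + M + ε₀/4 ≤ C := by rw [hCdef]; linarith only [hε₀]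
  have hC0 : 0 < C := by
    rw [hCdef]
    have : 0 ≤ K*A := mul_nonneg hK0 hA0
    linarith only [this, hM0, hε₀]
  clear_value C
  have htrans' : ∀ n, ∀ g : C(X × unitCircle, ℝ), ∀ (α : ℝ), 0 ≤ α →
      T n (g + α • (1 : C(X × unitCircle, ℝ))) = T n g + α • T n (1 : C(X × unitCircle, ℝ)) :=
    htrans
  -- the key pointwise estimate
  have key : ∀ n, ∀ w : X × unitCircle, |T n f w - f w| ≤ ε₀/4 + C *
      (|T n 1 w - 1| + |T n Q w - Q w|
        + (∑ k, (|T n (U k) w - (U k) w| + |T n (-(U k)) w - (-(U k)) w|))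
        + |T n Cc w - Cc w| + |T n (-Cc) w - (-Cc) w|
        + |T n Ss w - Ss w| + |T n (-Ss) w - (-Ss) w|) := by
    intro n w
    obtain ⟨a, hadef⟩ : ∃ a : ℝ, a = (∑ k, ((w.1 : Fin N → ℝ) k)^2) + 2 := ⟨_, rfl⟩
    obtain ⟨c, hcdef⟩ : ∃ c : Fin N → ℝ, c = fun k => -2 * (w.1 : Fin N → ℝ) k := ⟨_, rfl⟩
    obtain ⟨d1, hd1def⟩ : ∃ d1 : ℝ, d1 = -2 * (w.2 : ℝ × ℝ).1 := ⟨_, rfl⟩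
    obtain ⟨d2, hd2def⟩ : ∃ d2 : ℝ, d2 = -2 * (w.2 : ℝ × ℝ).2 := ⟨_, rfl⟩
    have hwX : (w.1 : Fin N → ℝ) ∈ X := w.1.2
    have hwS : (w.2 : ℝ × ℝ).1^2 + (w.2 : ℝ × ℝ).2^2 = 1 := w.2.2
    have ha0 : 0 ≤ a := by
      rw [hadef]
      have : 0 ≤ ∑ k, ((w.1 : Fin N → ℝ) k)^2 := Finset.sum_nonneg fun k _ => sq_nonneg _
      linarith only [this]
    have haA : a ≤ A := by
      have hsum : ∑ k, ((w.1 : Fin N → ℝ) k)^2 ≤ (N:ℝ)*R^2 := by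
        have : ∀ k ∈ Finset.univ, ((w.1 : Fin N → ℝ) k)^2 ≤ R^2 := by
          intro k _
          have h1 := hR _ hwX k
          nlinarith [abs_nonneg ((w.1 : Fin N → ℝ) k), sq_abs ((w.1 : Fin N → ℝ) k)]
        calc ∑ k, ((w.1 : Fin N → ℝ) k)^2 ≤ ∑ _k : Fin N, R^2 := Finset.sum_le_sum this
          _ = (N:ℝ)*R^2 := by simp [mul_comm]
      rw [hadef]
      linarith only [hsum, hANR]
    have hck : ∀ k, |c k| ≤ 2*R := by
      intro k
      rw [hcdef]
      have h1 := hR _ hwX k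
      rw [abs_mul]
      have : |(-2:ℝ)| = 2 := by norm_num
      rw [this]
      linarith only [h1]
    have ht1 : |(w.2 : ℝ × ℝ).1| ≤ 1 := by
      rw [← sq_le_one_iff_abs_le_one]
      linarith only [hwS, sq_nonneg (w.2 : ℝ × ℝ).2]
    have ht2 : |(w.2 : ℝ × ℝ).2| ≤ 1 := by
      rw [← sq_le_one_iff_abs_le_one]
      linarith only [hwS, sq_nonneg (w.2 : ℝ × ℝ).1]
    have hd1a : |d1| ≤ 2 := by
      rw [hd1def, abs_mul]
      have : |(-2:ℝ)| = 2 := by norm_num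
      rw [this]
      linarith only [ht1]
    have hd2a : |d2| ≤ 2 := by
      rw [hd2def, abs_mul]
      have : |(-2:ℝ)| = 2 := by norm_num
      rw [this]
      linarith only [ht2]
    -- the comparison continuous map
    obtain ⟨G, hGdef⟩ : ∃ G : C(X × unitCircle, ℝ),
        G = (Q + ∑ k, c k • U k) + (d1 • Cc + d2 • Ss) := ⟨_, rfl⟩
    obtain ⟨Φw, hΦwdef⟩ : ∃ Φw : C(X × unitCircle, ℝ), Φw = G + a • 1 := ⟨_, rfl⟩
    have hΦweval : ∀ z, Φw z = Φ w z := by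
      intro z
      have hz : (z.2 : ℝ × ℝ).1^2 + (z.2 : ℝ × ℝ).2^2 = 1 := z.2.2
      rw [hΦwdef, hGdef, hΦdef]
      simp only [ContinuousMap.add_apply, ContinuousMap.sum_apply, ContinuousMap.smul_apply,
        ContinuousMap.one_apply, smul_eq_mul, mul_one, hQ, hU, hCc, hSs,
        ContinuousMap.coe_mk]
      have esum : ∑ k, ((z.1 : Fin N → ℝ) k - (w.1 : Fin N → ℝ) k)^2
          = (∑ k, ((z.1 : Fin N → ℝ) k)^2)
            + ((∑ k, c k * (z.1 : Fin N → ℝ) k) + ∑ k, ((w.1 : Fin N → ℝ) k)^2) := by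
        rw [← Finset.sum_add_distrib, ← Finset.sum_add_distrib]
        refine Finset.sum_congr rfl fun k _ => by rw [hcdef]; ring
      rw [esum, hadef, hd1def, hd2def]
      linear_combination (-1)*hz + (-1)*hwS
    have hΦwself : Φw w = 0 := (hΦweval w).trans (hΦself w)
    -- the majorant
    obtain ⟨hw_, hhwdef⟩ : ∃ hw_ : C(X × unitCircle, ℝ),
        hw_ = K • Φw + (ε₀/4) • 1 := ⟨_, rfl⟩
    have hhweval : ∀ z, hw_ z = K * Φ w z + ε₀/4 := by
      intro z
      rw [hhwdef]
      simp only [ContinuousMap.add_apply, ContinuousMap.smul_apply, ContinuousMap.one_apply,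
        smul_eq_mul, mul_one]
      rw [hΦweval z]
    have hup : ∀ z, f z ≤ f w + hw_ z := by
      intro z
      rw [hhweval z]
      have := hfest w z
      rw [abs_le] at this
      linarith only [this.2]
    have hlow : ∀ z, f w ≤ f z + hw_ z := by
      intro z
      rw [hhweval z]
      have := hfest w z
      rw [abs_le] at this
      linarith only [this.1]
    have hkey1 : |T n f w - f w * T n 1 w| ≤ T n hw_ w :=
      aux_key (T n) (hsubadd n) (hhom n) (hmono n) (htrans' n) f hw_ M hM w hup hlow
    -- expand T n hw_
    have e4 : T n hw_ = T n (K • Φw) + (ε₀/4) • T n 1 := by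
      rw [hhwdef]
      exact htrans' n (K • Φw) (ε₀/4) (le_of_lt (by linarith only [hε₀]))
    have e5 : T n (K • Φw) = K • T n Φw := hhom n K hK0 Φw
    have e6 : T n Φw = T n G + a • T n 1 := by
      rw [hΦwdef]
      exact htrans' n G a ha0
    have e7 : T n G ≤ (T n Q + ∑ k, T n (c k • U k)) + (T n (d1 • Cc) + T n (d2 • Ss)) := by
      rw [hGdef]
      refine le_trans (hsubadd n _ _) (add_le_add ?_ (hsubadd n _ _))
      refine le_trans (hsubadd n _ _) (add_le_add le_rfl ?_)
      exact aux_finsub (T n) (hsubadd n) (hhom n) Finset.univ _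
    have e7w := ContinuousMap.le_def.mp e7 w
    simp only [ContinuousMap.add_apply, ContinuousMap.sum_apply] at e7w
    -- bound each term at w
    have cbk : ∀ k, T n (c k • U k) w
        ≤ c k * (U k) w + 2*R * (|T n (U k) w - (U k) w| + |T n (-(U k)) w - (-(U k)) w|) := by
      intro k
      have h1 := aux_cbound (T n) (hhom n) (c k) (U k) w
      have h2 : |c k| * (|T n (U k) w - (U k) w| + |T n (-(U k)) w - (-(U k)) w|)
          ≤ 2*R * (|T n (U k) w - (U k) w| + |T n (-(U k)) w - (-(U k)) w|) := by
        exact mul_le_mul_of_nonneg_right (hck k) (add_nonneg (abs_nonneg _) (abs_nonneg _))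
      linarith only [h1, h2]
    have cbsum : (∑ k, T n (c k • U k) w)
        ≤ (∑ k, c k * (U k) w)
          + 2*R * (∑ k, (|T n (U k) w - (U k) w| + |T n (-(U k)) w - (-(U k)) w|)) := by
      rw [Finset.mul_sum, ← Finset.sum_add_distrib]
      exact Finset.sum_le_sum fun k _ => cbk k
    have cbC : T n (d1 • Cc) w ≤ d1 * Cc w + 2 * (|T n Cc w - Cc w| + |T n (-Cc) w - (-Cc) w|) := by
      have h1 := aux_cbound (T n) (hhom n) d1 Cc w
      have h2 : |d1| * (|T n Cc w - Cc w| + |T n (-Cc) w - (-Cc) w|)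
          ≤ 2 * (|T n Cc w - Cc w| + |T n (-Cc) w - (-Cc) w|) := by
        exact mul_le_mul_of_nonneg_right hd1a (add_nonneg (abs_nonneg _) (abs_nonneg _))
      linarith only [h1, h2]
    have cbS : T n (d2 • Ss) w ≤ d2 * Ss w + 2 * (|T n Ss w - Ss w| + |T n (-Ss) w - (-Ss) w|) := by
      have h1 := aux_cbound (T n) (hhom n) d2 Ss w
      have h2 : |d2| * (|T n Ss w - Ss w| + |T n (-Ss) w - (-Ss) w|)
          ≤ 2 * (|T n Ss w - Ss w| + |T n (-Ss) w - (-Ss) w|) := by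
        exact mul_le_mul_of_nonneg_right hd2a (add_nonneg (abs_nonneg _) (abs_nonneg _))
      linarith only [h1, h2]
    -- value identity at w
    have hval0 : Q w + ∑ k, c k * (U k) w + (d1 * Cc w + d2 * Ss w) + a * 1 = 0 := by
      have h0 := hΦwself
      rw [hΦwdef, hGdef] at h0
      simpa only [ContinuousMap.add_apply, ContinuousMap.sum_apply, ContinuousMap.smul_apply,
        ContinuousMap.one_apply, smul_eq_mul] using h0
    -- abbreviations
    obtain ⟨sw, hswdef⟩ : ∃ sw : ℝ, sw = |T n 1 w - 1| + |T n Q w - Q w|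
        + (∑ k, (|T n (U k) w - (U k) w| + |T n (-(U k)) w - (-(U k)) w|))
        + |T n Cc w - Cc w| + |T n (-Cc) w - (-Cc) w|
        + |T n Ss w - Ss w| + |T n (-Ss) w - (-Ss) w| := ⟨_, rfl⟩
    have hSsum0 : 0 ≤ ∑ k, (|T n (U k) w - (U k) w| + |T n (-(U k)) w - (-(U k)) w|) :=
      Finset.sum_nonneg fun k _ => add_nonneg (abs_nonneg _) (abs_nonneg _)
    have hD1sw : |T n 1 w - 1| ≤ sw := by
      rw [hswdef]
      have a1 : (0:ℝ) ≤ |T n Q w - Q w| := abs_nonneg _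
      have a2 : (0:ℝ) ≤ |T n Cc w - Cc w| := abs_nonneg _
      have a3 : (0:ℝ) ≤ |T n (-Cc) w - (-Cc) w| := abs_nonneg _
      have a4 : (0:ℝ) ≤ |T n Ss w - Ss w| := abs_nonneg _
      have a5 : (0:ℝ) ≤ |T n (-Ss) w - (-Ss) w| := abs_nonneg _
      linarith only [hSsum0, a1, a2, a3, a4, a5]
    have hsw0 : 0 ≤ sw := le_trans (abs_nonneg _) hD1sw
    -- assemble: T n Φw w ≤ A * sw
    have hTΦ : T n Φw w ≤ A * sw := by
      have e6w : T n Φw w = T n G w + a * T n 1 w := by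
        rw [e6]
        simp only [ContinuousMap.add_apply, ContinuousMap.smul_apply, smul_eq_mul]
      have q1 : T n Q w - Q w ≤ |T n Q w - Q w| := le_abs_self _
      have p1 : a * (T n 1 w - 1) ≤ a * |T n 1 w - 1| :=
        mul_le_mul_of_nonneg_left (le_abs_self _) ha0
      have p2 : a * |T n 1 w - 1| ≤ A * |T n 1 w - 1| :=
        mul_le_mul_of_nonneg_right haA (abs_nonneg _)
      have p3 : 2*R * (∑ k, (|T n (U k) w - (U k) w| + |T n (-(U k)) w - (-(U k)) w|))
          ≤ A * (∑ k, (|T n (U k) w - (U k) w| + |T n (-(U k)) w - (-(U k)) w|)) :=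
        mul_le_mul_of_nonneg_right hA2R hSsum0
      have p4 : 2 * (|T n Cc w - Cc w| + |T n (-Cc) w - (-Cc) w|)
          ≤ A * (|T n Cc w - Cc w| + |T n (-Cc) w - (-Cc) w|) :=
        mul_le_mul_of_nonneg_right hA2 (add_nonneg (abs_nonneg _) (abs_nonneg _))
      have p5 : 2 * (|T n Ss w - Ss w| + |T n (-Ss) w - (-Ss) w|)
          ≤ A * (|T n Ss w - Ss w| + |T n (-Ss) w - (-Ss) w|) :=
        mul_le_mul_of_nonneg_right hA2 (add_nonneg (abs_nonneg _) (abs_nonneg _))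
      have p6 : |T n Q w - Q w| ≤ A * |T n Q w - Q w| :=
        le_mul_of_one_le_left (abs_nonneg _) hA1
      rw [hswdef]
      rw [e6w]
      linarith only [e7w, cbsum, cbC, cbS, hval0, q1, p1, p2, p3, p4, p5, p6]
    -- finish
    have hH : T n hw_ w = K * T n Φw w + (ε₀/4) * T n 1 w := by
      rw [e4, e5]
      simp only [ContinuousMap.add_apply, ContinuousMap.smul_apply, smul_eq_mul]
    have hKP : K * T n Φw w ≤ K * (A * sw) := mul_le_mul_of_nonneg_left hTΦ hK0
    have hEO : (ε₀/4) * T n 1 w ≤ ε₀/4 + (ε₀/4) * |T n 1 w - 1| := by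
      have : (ε₀/4) * (T n 1 w - 1) ≤ (ε₀/4) * |T n 1 w - 1| :=
        mul_le_mul_of_nonneg_left (le_abs_self _) (le_of_lt (by linarith only [hε₀]))
      linarith only [this]
    have habs : |T n f w - f w| ≤ |T n f w - f w * T n 1 w| + M * |T n 1 w - 1| := by
      have h1 : |T n f w - f w| ≤ |T n f w - f w * T n 1 w| + |f w * (T n 1 w - 1)| := by
        have : T n f w - f w = (T n f w - f w * T n 1 w) + f w * (T n 1 w - 1) := by ring
        rw [this]
        exact abs_add_le _ _
      have h2 : |f w * (T n 1 w - 1)| ≤ M * |T n 1 w - 1| := by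
        rw [abs_mul]
        exact mul_le_mul_of_nonneg_right (hM w) (abs_nonneg _)
      linarith only [h1, h2]
    have hfin1 : (ε₀/4) * |T n 1 w - 1| + M * |T n 1 w - 1| ≤ (ε₀/4 + M) * sw := by
      have h1 : (ε₀/4 + M) * |T n 1 w - 1| ≤ (ε₀/4 + M) * sw :=
        mul_le_mul_of_nonneg_left hD1sw (by linarith only [hε₀, hM0])
      linarith only [h1]
    have hfin2 : K * (A * sw) + (ε₀/4 + M) * sw ≤ C * sw := by
      have : K * (A * sw) = (K * A) * sw := by ring
      rw [this]
      have h1 : (K * A + (ε₀/4 + M)) * sw ≤ C * sw :=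
        mul_le_mul_of_nonneg_right (by linarith only [hCKA]) hsw0
      linarith only [h1]
    rw [← hswdef]
    linarith only [habs, hkey1, hH, hKP, hEO, hfin1, hfin2]
  -- choose the threshold
  have hden : (0:ℝ) < C * (2*(N:ℝ)+6) := by
    have h1 : (0:ℝ) < 2*(N:ℝ)+6 := by positivity
    exact mul_pos hC0 h1
  obtain ⟨η, hη, hηe⟩ : ∃ η : ℝ, 0 < η ∧ C * ((2*(N:ℝ)+6) * η) ≤ ε₀/4 := by
    have h4 : (0:ℝ) < 4*(C*(2*(N:ℝ)+6)) := by linarith only [hden]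
    refine ⟨ε₀/(4*(C*(2*(N:ℝ)+6))), div_pos hε₀ h4, le_of_eq ?_⟩
    field_simp [hden.ne']
  -- inclusion into the union of test sets
  have hsub2 : ∀ n, {z : X × unitCircle | ε₀ ≤ |T n f z - f z|} ⊆
      ({z : X × unitCircle | η ≤ |T n 1 z - 1|} ∪ {z : X × unitCircle | η ≤ |T n Q z - Q z|}
      ∪ (⋃ k, {z : X × unitCircle | η ≤ |T n (U k) z - (U k) z|})
      ∪ (⋃ k, {z : X × unitCircle | η ≤ |T n (-(U k)) z - (-(U k)) z|})
      ∪ {z : X × unitCircle | η ≤ |T n Cc z - Cc z|}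
      ∪ {z : X × unitCircle | η ≤ |T n (-Cc) z - (-Cc) z|}
      ∪ {z : X × unitCircle | η ≤ |T n Ss z - Ss z|}
      ∪ {z : X × unitCircle | η ≤ |T n (-Ss) z - (-Ss) z|}) := by
    intro n z hz
    rw [Set.mem_setOf_eq] at hz
    by_contra hnot
    simp only [Set.mem_union, Set.mem_iUnion, Set.mem_setOf_eq, not_or, not_exists,
      not_le] at hnot
    obtain ⟨⟨⟨⟨⟨⟨⟨h1, h2⟩, h3⟩, h4⟩, h5⟩, h6⟩, h7⟩, h8⟩ := hnot
    have hsum : (∑ k, (|T n (U k) z - (U k) z| + |T n (-(U k)) z - (-(U k)) z|))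
        ≤ (N:ℝ) * (2*η) := by
      calc (∑ k, (|T n (U k) z - (U k) z| + |T n (-(U k)) z - (-(U k)) z|))
          ≤ ∑ _k : Fin N, 2*η :=
            Finset.sum_le_sum fun k _ => by linarith only [h3 k, h4 k]
        _ = (N:ℝ) * (2*η) := by simp [mul_comm]
    have hS : (|T n 1 z - 1| + |T n Q z - Q z|
        + (∑ k, (|T n (U k) z - (U k) z| + |T n (-(U k)) z - (-(U k)) z|))
        + |T n Cc z - Cc z| + |T n (-Cc) z - (-Cc) z|
        + |T n Ss z - Ss z| + |T n (-Ss) z - (-Ss) z|) ≤ (2*(N:ℝ)+6) * η := by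
      linarith only [h1, h2, hsum, h5, h6, h7, h8]
    have hCS := mul_le_mul_of_nonneg_left hS (le_of_lt hC0)
    have hk := key n z
    linarith only [hz, hk, hCS, hηe, hε₀]
  -- measure bound
  have hbound : ∀ n, μ {z : X × unitCircle | ε₀ ≤ |T n f z - f z|} ≤
      ((((((μ {z : X × unitCircle | η ≤ |T n 1 z - 1|}
        + μ {z : X × unitCircle | η ≤ |T n Q z - Q z|})
        + ∑ k, μ {z : X × unitCircle | η ≤ |T n (U k) z - (U k) z|})
        + ∑ k, μ {z : X × unitCircle | η ≤ |T n (-(U k)) z - (-(U k)) z|})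
        + μ {z : X × unitCircle | η ≤ |T n Cc z - Cc z|})
        + μ {z : X × unitCircle | η ≤ |T n (-Cc) z - (-Cc) z|})
        + μ {z : X × unitCircle | η ≤ |T n Ss z - Ss z|})
        + μ {z : X × unitCircle | η ≤ |T n (-Ss) z - (-Ss) z|} := by
    intro n
    refine le_trans (measure_mono (hsub2 n)) ?_
    have mU : ∀ (s : Fin N → Set (X × unitCircle)), μ (⋃ k, s k) ≤ ∑ k, μ (s k) := by
      intro s
      refine le_trans (measure_iUnion_le s) ?_
      rw [tsum_fintype]
    refine le_trans (measure_union_le _ _) (add_le_add ?_ le_rfl)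
    refine le_trans (measure_union_le _ _) (add_le_add ?_ le_rfl)
    refine le_trans (measure_union_le _ _) (add_le_add ?_ le_rfl)
    refine le_trans (measure_union_le _ _) (add_le_add ?_ le_rfl)
    refine le_trans (measure_union_le _ _) (add_le_add ?_ (mU _))
    refine le_trans (measure_union_le _ _) (add_le_add ?_ (mU _))
    exact le_trans (measure_union_le _ _) (add_le_add le_rfl le_rfl)
  -- convergence of each test piece
  have t1 : Tendsto (fun n => μ {z : X × unitCircle | η ≤ |T n 1 z - 1|}) atTop (𝓝 0) := by
    have := htest 1 ⟨fun _ => 1, Or.inl rfl, fun _ => 1, Or.inl rfl,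
      fun z => by simp⟩ η hη
    simpa only [ContinuousMap.one_apply] using this
  have tQ : Tendsto (fun n => μ {z : X × unitCircle | η ≤ |T n Q z - Q z|}) atTop (𝓝 0) :=
    htest Q ⟨fun x => ∑ k, ((x : Fin N → ℝ) k)^2, Or.inr (Or.inr (Or.inr rfl)),
      fun _ => 1, Or.inl rfl, fun z => by simp [hQ]⟩ η hη
  have tU : ∀ k, Tendsto (fun n => μ {z : X × unitCircle | η ≤ |T n (U k) z - (U k) z|})
      atTop (𝓝 0) := fun k =>
    htest (U k) ⟨fun x => (x : Fin N → ℝ) k, Or.inr (Or.inl ⟨k, rfl⟩),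
      fun _ => 1, Or.inl rfl, fun z => by simp [hU]⟩ η hη
  have tnU : ∀ k, Tendsto
      (fun n => μ {z : X × unitCircle | η ≤ |T n (-(U k)) z - (-(U k)) z|}) atTop (𝓝 0) :=
    fun k =>
    htest (-(U k)) ⟨fun x => -((x : Fin N → ℝ) k), Or.inr (Or.inr (Or.inl ⟨k, rfl⟩)),
      fun _ => 1, Or.inl rfl, fun z => by simp [hU]⟩ η hη
  have tC : Tendsto (fun n => μ {z : X × unitCircle | η ≤ |T n Cc z - Cc z|}) atTop (𝓝 0) :=
    htest Cc ⟨fun _ => 1, Or.inl rfl, fun s => (s : ℝ × ℝ).1, Or.inr (Or.inl rfl),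
      fun z => by simp [hCc]⟩ η hη
  have tnC : Tendsto (fun n => μ {z : X × unitCircle | η ≤ |T n (-Cc) z - (-Cc) z|})
      atTop (𝓝 0) :=
    htest (-Cc) ⟨fun _ => 1, Or.inl rfl, fun s => -(s : ℝ × ℝ).1,
      Or.inr (Or.inr (Or.inl rfl)), fun z => by simp [hCc]⟩ η hη
  have tS : Tendsto (fun n => μ {z : X × unitCircle | η ≤ |T n Ss z - Ss z|}) atTop (𝓝 0) :=
    htest Ss ⟨fun _ => 1, Or.inl rfl, fun s => (s : ℝ × ℝ).2,
      Or.inr (Or.inr (Or.inr (Or.inl rfl))), fun z => by simp [hSs]⟩ η hη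
  have tnS : Tendsto (fun n => μ {z : X × unitCircle | η ≤ |T n (-Ss) z - (-Ss) z|})
      atTop (𝓝 0) :=
    htest (-Ss) ⟨fun _ => 1, Or.inl rfl, fun s => -(s : ℝ × ℝ).2,
      Or.inr (Or.inr (Or.inr (Or.inr rfl))), fun z => by simp [hSs]⟩ η hη
  have tsU : Tendsto
      (fun n => ∑ k, μ {z : X × unitCircle | η ≤ |T n (U k) z - (U k) z|}) atTop (𝓝 0) := by
    have := tendsto_finset_sum (Finset.univ : Finset (Fin N)) (fun k _ => tU k)
    simpa using this
  have tsnU : Tendsto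
      (fun n => ∑ k, μ {z : X × unitCircle | η ≤ |T n (-(U k)) z - (-(U k)) z|})
      atTop (𝓝 0) := by
    have := tendsto_finset_sum (Finset.univ : Finset (Fin N)) (fun k _ => tnU k)
    simpa using this
  have tall : Tendsto (fun n =>
      ((((((μ {z : X × unitCircle | η ≤ |T n 1 z - 1|}
        + μ {z : X × unitCircle | η ≤ |T n Q z - Q z|})
        + ∑ k, μ {z : X × unitCircle | η ≤ |T n (U k) z - (U k) z|})
        + ∑ k, μ {z : X × unitCircle | η ≤ |T n (-(U k)) z - (-(U k)) z|})
        + μ {z : X × unitCircle | η ≤ |T n Cc z - Cc z|})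
        + μ {z : X × unitCircle | η ≤ |T n (-Cc) z - (-Cc) z|})
        + μ {z : X × unitCircle | η ≤ |T n Ss z - Ss z|})
        + μ {z : X × unitCircle | η ≤ |T n (-Ss) z - (-Ss) z|}) atTop (𝓝 0) := by
    have h0 : (𝓝 (0:ENNReal)) = 𝓝 (((((((0+0)+0)+0)+0)+0)+0)+0) := by norm_num
    rw [h0]
    exact ((((((t1.add tQ).add tsU).add tsnU).add tC).add tnC).add tS).add tnS
  exact tendsto_of_tendsto_of_tendsto_of_le_of_le tendsto_const_nhds tall
    (fun n => zero_le) hbound
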